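/- arXiv:1306.0649 — 2 statements merged into one kernel-verified Lean document; each statement's English description precedes it below -/
import Mathlib

section
/- Conversely, if f : F_p^n → C satisfies ‖f‖_∞ ≤ 1 and ‖f‖_{U^{d+1}} = 1, then f = e^{2πiP} for some non-classical polynomial P : F_p^n → T of degree ≤ d. -/
open Finset Complex AddCircle

/-- `P : V → ℝ/ℤ` is a non-classical polynomial of degree ≤ d: all `(d+1)`-fold additive
derivatives vanish. -/
def IsPolyDegLE {V : Type*} [AddCommGroup V] (P : V → AddCircle (1 : ℝ)) (d : ℕ) : Prop :=
  ∀ (y : Fin (d + 1) → V) (x : V),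
    ∑ I : Finset (Fin (d + 1)),
      ((-1 : ℤ) ^ (d + 1 - I.card)) • P (x + ∑ i ∈ I, y i) = 0

/-- The complex Gowers average of order `d`. -/
noncomputable def cGowersAvg {V : Type*} [AddCommGroup V] [Fintype V]
    (f : V → ℂ) (d : ℕ) : ℂ :=
  (∑ x : V, ∑ y : Fin d → V, ∏ I : Finset (Fin d),
      (if Even I.card then f (x + ∑ i ∈ I, y i)
       else (starRingEnd ℂ) (f (x + ∑ i ∈ I, y i)))) /
    ((Fintype.card V : ℂ) ^ (d + 1))

/-- Gowers norm of order `d`. -/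
noncomputable def cGowersNorm {V : Type*} [AddCommGroup V] [Fintype V]
    (f : V → ℂ) (d : ℕ) : ℝ :=
  ‖cGowersAvg f d‖ ^ ((1 : ℝ) / 2 ^ d)

/-- `toCircle` as an additive monoid hom into `Additive Circle`. -/
noncomputable def toCircleHom (T : ℝ) : AddCircle T →+ Additive Circle :=
  AddMonoidHom.mk' (fun q => Additive.ofMul (AddCircle.toCircle q))
    (fun a b => by simp [AddCircle.toCircle_add, ofMul_mul])

lemma toCircle_zsmul {T : ℝ} (m : ℤ) (q : AddCircle T) :
    AddCircle.toCircle (m • q) = AddCircle.toCircle q ^ m := by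
  have h := map_zsmul (toCircleHom T) m q
  have h2 := congrArg Additive.toMul h
  simpa [toCircleHom, toMul_zsmul] using h2

lemma toCircle_sum {T : ℝ} {ι : Type*} (s : Finset ι) (g : ι → AddCircle T) :
    AddCircle.toCircle (∑ i ∈ s, g i) = ∏ i ∈ s, AddCircle.toCircle (g i) := by
  induction s using Finset.cons_induction with
  | empty => simp
  | cons a s ha ih => rw [Finset.sum_cons, Finset.prod_cons, AddCircle.toCircle_add, ih]

/-- General version over an arbitrary finite additive group. -/
theorem exp_poly_of_gowersNorm_eq_one_aux {V : Type*} [AddCommGroup V] [Fintype V] (d : ℕ)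
    (f : V → ℂ) (hf : ∀ x, ‖f x‖ ≤ 1)
    (hU : cGowersNorm f (d + 1) = 1) :
    ∃ P : V → AddCircle (1 : ℝ), IsPolyDegLE P d ∧
      ∀ x, f x = ((AddCircle.toCircle (P x) : Circle) : ℂ) := by
  classical
  have hne : Nonempty V := ⟨0⟩
  set T : V → (Fin (d + 1) → V) → ℂ := fun x y => ∏ I : Finset (Fin (d + 1)),
      (if Even I.card then f (x + ∑ i ∈ I, y i)
       else (starRingEnd ℂ) (f (x + ∑ i ∈ I, y i))) with hT
  set S : ℂ := ∑ x : V, ∑ y : Fin (d + 1) → V, T x y with hSdef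
  have hAvg : cGowersAvg f (d + 1) = S / ((Fintype.card V : ℂ) ^ (d + 2)) := rfl
  set M : ℝ := (Fintype.card V : ℝ) ^ (d + 2) with hMdef
  have hMpos : 0 < M := by
    have : 0 < Fintype.card V := Fintype.card_pos
    positivity
  have hMC : ((Fintype.card V : ℂ) ^ (d + 2)) = (M : ℂ) := by push_cast [hMdef]; ring
  -- Step 1 : |avg| = 1
  have hA : ‖cGowersAvg f (d + 1)‖ = 1 := by
    have h0 : (0 : ℝ) ≤ ‖cGowersAvg f (d + 1)‖ := norm_nonneg _
    have h := congrArg (fun t : ℝ => t ^ ((2 : ℝ) ^ (d + 1))) hU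
    simp only [cGowersNorm] at h
    rwa [← Real.rpow_mul h0, one_div, inv_mul_cancel₀ (by positivity), Real.rpow_one,
      Real.one_rpow] at h
  -- Step 2 : |S| = M
  have hS : ‖S‖ = M := by
    rw [hAvg, norm_div, hMC, Complex.norm_real, Real.norm_eq_abs, abs_of_pos hMpos,
      div_eq_one_iff_eq hMpos.ne'] at hA
    exact hA
  -- Step 3 : extraction of the equality case
  set c : ℂ := (starRingEnd ℂ) S / (M : ℂ) with hcdef
  have habsc : ‖c‖ = 1 := by
    rw [hcdef, norm_div, Complex.norm_conj, hS, Complex.norm_real, Real.norm_eq_abs, abs_of_pos hMpos,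
      div_self hMpos.ne']
  have hcS : c * S = (M : ℂ) := by
    rw [hcdef, div_mul_eq_mul_div, mul_comm, Complex.mul_conj]
    rw [div_eq_iff (by exact_mod_cast hMpos.ne' : (M : ℂ) ≠ 0)]
    norm_cast
    rw [Complex.normSq_eq_norm_sq, hS]
    ring
  have habsT : ∀ x y, ‖T x y‖ ≤ 1 := by
    intro x y
    rw [hT]
    rw [norm_prod]
    refine Finset.prod_le_one (fun I _ => norm_nonneg _) (fun I _ => ?_)
    split_ifs
    · exact hf _
    · rw [Complex.norm_conj]; exact hf _
  have hcard : (Fintype.card (V × (Fin (d + 1) → V)) : ℝ) = M := by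
    rw [Fintype.card_prod, Fintype.card_fun, Fintype.card_fin, hMdef]
    push_cast
    ring
  have hsum : ∑ z : V × (Fin (d + 1) → V), (c * T z.1 z.2).re
      = ∑ _z : V × (Fin (d + 1) → V), (1 : ℝ) := by
    rw [← Complex.re_sum, ← Finset.mul_sum]
    have hstep : ∑ z : V × (Fin (d + 1) → V), T z.1 z.2 = S := by
      exact Fintype.sum_prod_type _
    rw [hstep, hcS, Complex.ofReal_re, Finset.sum_const, Finset.card_univ]
    simp [← hcard]
  have hbound : ∀ z : V × (Fin (d + 1) → V), (c * T z.1 z.2).re ≤ 1 := fun z =>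
    (Complex.re_le_norm _).trans (by rw [norm_mul, habsc, one_mul]; exact habsT _ _)
  have key : ∀ (x : V) (y : Fin (d + 1) → V), c * T x y = 1 := by
    have h := (Finset.sum_eq_sum_iff_of_le (fun z _ => hbound z)).1 hsum
    intro x y
    have hre : (c * T x y).re = 1 := h (x, y) (Finset.mem_univ _)
    have habs : ‖c * T x y‖ ≤ 1 := by
      rw [norm_mul, habsc, one_mul]; exact habsT x y
    have hsq : ‖c * T x y‖ ^ 2 = (c * T x y).re ^ 2 + (c * T x y).im ^ 2 := by
      rw [Complex.sq_norm, Complex.normSq_apply]; ring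
    have him : (c * T x y).im = 0 := by
      nlinarith [norm_nonneg (c * T x y)]
    exact Complex.ext hre him
  -- Step 4 : counting even/odd subsets
  set E : ℕ := (Finset.univ.filter (fun I : Finset (Fin (d + 1)) => Even I.card)).card with hEdef
  set O : ℕ := (Finset.univ.filter (fun I : Finset (Fin (d + 1)) => ¬ Even I.card)).card
    with hOdef
  have hEO : E = O := by
    have h0 : ∑ I : Finset (Fin (d + 1)), ((-1 : ℤ)) ^ I.card = 0 := by
      have := Finset.sum_powerset_neg_one_pow_card_of_nonempty
        (x := (Finset.univ : Finset (Fin (d + 1)))) Finset.univ_nonempty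
      simpa [Finset.powerset_univ] using this
    have hsplit := Finset.sum_filter_add_sum_filter_not Finset.univ
      (fun I : Finset (Fin (d + 1)) => Even I.card) (fun I => ((-1 : ℤ)) ^ I.card)
    rw [h0] at hsplit
    have h1 : ∑ I ∈ Finset.univ.filter (fun I : Finset (Fin (d + 1)) => Even I.card),
        ((-1 : ℤ)) ^ I.card = (E : ℤ) := by
      rw [Finset.sum_congr rfl (fun I hI => (Finset.mem_filter.1 hI).2.neg_one_pow)]
      simp [hEdef]
    have h2 : ∑ I ∈ Finset.univ.filter (fun I : Finset (Fin (d + 1)) => ¬ Even I.card),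
        ((-1 : ℤ)) ^ I.card = -(O : ℤ) := by
      rw [Finset.sum_congr rfl (fun I hI =>
        (Nat.not_even_iff_odd.1 (Finset.mem_filter.1 hI).2).neg_one_pow)]
      simp [hOdef]
    rw [h1, h2] at hsplit
    omega
  have hEpos : 0 < E := by
    rw [hEdef, Finset.card_pos]
    exact ⟨∅, Finset.mem_filter.2 ⟨Finset.mem_univ _, by simp⟩⟩
  -- Step 5 : the diagonal term is a nonnegative real power
  have hT0 : ∀ x : V, T x 0 = ((Complex.normSq (f x) : ℝ) : ℂ) ^ E := by
    intro x
    have hxz : ∀ I : Finset (Fin (d + 1)), x + ∑ i ∈ I, (0 : Fin (d + 1) → V) i = x := by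
      intro I; simp
    rw [hT]
    simp only [hxz]
    rw [Finset.prod_ite, Finset.prod_const, Finset.prod_const, ← hEdef, ← hOdef, ← hEO,
      ← mul_pow, Complex.mul_conj]
  -- Step 6 : |f| = 1 everywhere and c = 1
  have hns : ∀ x, Complex.normSq (f x) = 1 := by
    intro x
    have h1 : c * T x 0 = 1 := key x 0
    have habs : ‖T x 0‖ = 1 := by
      have h := congrArg (fun z : ℂ => ‖z‖) h1
      rwa [norm_mul, habsc, one_mul, norm_one] at h
    rw [hT0 x, norm_pow, Complex.norm_real, Real.norm_eq_abs, _root_.abs_of_nonneg (Complex.normSq_nonneg _)] at habs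
    have hle : Complex.normSq (f x) ≤ 1 := by
      rw [Complex.normSq_eq_norm_sq]
      nlinarith [hf x, norm_nonneg (f x)]
    by_contra hne'
    have hlt : Complex.normSq (f x) < 1 := lt_of_le_of_ne hle hne'
    have := pow_lt_one₀ (Complex.normSq_nonneg _) hlt hEpos.ne'
    rw [habs] at this
    exact lt_irrefl _ this
  have hc1 : c = 1 := by
    have h1 : c * T 0 0 = 1 := key 0 0
    rw [hT0 0, hns 0] at h1
    simpa using h1
  have keyT : ∀ x y, T x y = 1 := by
    intro x y
    have := key x y
    rwa [hc1, one_mul] at this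
  -- Step 7 : construction of P
  have hmem : ∀ x, f x ∈ Submonoid.unitSphere ℂ := by
    intro x
    show f x ∈ Metric.sphere (0 : ℂ) 1
    rw [mem_sphere_zero_iff_norm, Complex.norm_def, hns x, Real.sqrt_one]
  set F : V → Circle := fun x => ⟨f x, hmem x⟩ with hFdef
  set P : V → AddCircle (1 : ℝ) := fun x => (homeomorphCircle one_ne_zero).symm (F x) with hPdef
  have hPF : ∀ x, AddCircle.toCircle (P x) = F x := by
    intro x
    rw [hPdef, ← homeomorphCircle_apply one_ne_zero, Homeomorph.apply_symm_apply]
  have hfP : ∀ x, f x = ((AddCircle.toCircle (P x) : Circle) : ℂ) := by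
    intro x
    rw [hPF x]
  refine ⟨P, ?_, hfP⟩
  -- Step 8 : P is a polynomial of degree ≤ d
  intro y x
  have hcoe : ∀ I : Finset (Fin (d + 1)),
      ((AddCircle.toCircle (((-1 : ℤ) ^ I.card) • P (x + ∑ i ∈ I, y i)) : Circle) : ℂ)
        = (if Even I.card then f (x + ∑ i ∈ I, y i)
           else (starRingEnd ℂ) (f (x + ∑ i ∈ I, y i))) := by
    intro I
    rw [_root_.toCircle_zsmul]
    by_cases hI : Even I.card
    · rw [if_pos hI, hI.neg_one_pow, zpow_one, ← hfP]
    · rw [if_neg hI, (Nat.not_even_iff_odd.1 hI).neg_one_pow, zpow_neg_one,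
        Circle.coe_inv_eq_conj, ← hfP]
  have hprod1 : AddCircle.toCircle
      (∑ I : Finset (Fin (d + 1)), ((-1 : ℤ) ^ I.card) • P (x + ∑ i ∈ I, y i)) = 1 := by
    rw [toCircle_sum]
    apply Circle.coe_injective
    have hmp : ((∏ I : Finset (Fin (d + 1)),
        AddCircle.toCircle (((-1 : ℤ) ^ I.card) • P (x + ∑ i ∈ I, y i)) : Circle) : ℂ)
        = ∏ I : Finset (Fin (d + 1)),
          ((AddCircle.toCircle (((-1 : ℤ) ^ I.card) • P (x + ∑ i ∈ I, y i)) : Circle) : ℂ) :=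
      map_prod Circle.coeHom _ _
    rw [hmp, Finset.prod_congr rfl (fun I _ => hcoe I)]
    rw [Circle.coe_one]
    exact keyT x y
  have hsum0 : ∑ I : Finset (Fin (d + 1)), ((-1 : ℤ) ^ I.card) • P (x + ∑ i ∈ I, y i) = 0 :=
    injective_toCircle one_ne_zero (by rw [hprod1, AddCircle.toCircle_zero])
  have hexp : ∀ I : Finset (Fin (d + 1)),
      ((-1 : ℤ)) ^ (d + 1 - I.card) = (-1) ^ (d + 1) * (-1) ^ I.card := by
    intro I
    have hle : I.card ≤ d + 1 := by
      have h := Finset.card_le_univ I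
      simpa using h
    have h2 : ((-1 : ℤ)) ^ I.card * (-1) ^ I.card = 1 := by
      rw [← pow_add]
      exact Even.neg_one_pow ⟨I.card, rfl⟩
    calc ((-1 : ℤ)) ^ (d + 1 - I.card)
        = (-1) ^ (d + 1 - I.card) * ((-1) ^ I.card * (-1) ^ I.card) := by rw [h2, mul_one]
      _ = ((-1) ^ (d + 1 - I.card) * (-1) ^ I.card) * (-1) ^ I.card := by ring
      _ = (-1) ^ (d + 1) * (-1) ^ I.card := by rw [← pow_add, Nat.sub_add_cancel hle]
  calc ∑ I : Finset (Fin (d + 1)), ((-1 : ℤ) ^ (d + 1 - I.card)) • P (x + ∑ i ∈ I, y i)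
      = ∑ I : Finset (Fin (d + 1)),
          (((-1 : ℤ) ^ (d + 1)) * ((-1 : ℤ) ^ I.card)) • P (x + ∑ i ∈ I, y i) :=
        Finset.sum_congr rfl (fun I _ => by rw [hexp I])
    _ = ((-1 : ℤ) ^ (d + 1)) • ∑ I : Finset (Fin (d + 1)),
          ((-1 : ℤ) ^ I.card) • P (x + ∑ i ∈ I, y i) := by
        rw [Finset.smul_sum]
        exact Finset.sum_congr rfl (fun I _ => mul_smul _ _ _)
    _ = 0 := by rw [hsum0, smul_zero]

/-- If `f : F_p^n → ℂ` satisfies `‖f‖_∞ ≤ 1` and `‖f‖_{U^{d+1}} = 1`,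
then `f = e^{2πiP}` for a non-classical polynomial `P` of degree ≤ d. -/
theorem exp_poly_of_gowersNorm_eq_one {p n : ℕ} [Fact p.Prime] (d : ℕ)
    (f : (Fin n → ZMod p) → ℂ) (hf : ∀ x, ‖f x‖ ≤ 1)
    (hU : cGowersNorm f (d + 1) = 1) :
    ∃ P : (Fin n → ZMod p) → AddCircle (1 : ℝ), IsPolyDegLE P d ∧
      ∀ x, f x = ((AddCircle.toCircle (P x) : Circle) : ℂ) := by
  exact exp_poly_of_gowersNorm_eq_one_aux d f hf hU
end

section
/- Let f, g : F_p^n → {0,1} with ‖f−g‖_1 = α, and let A : F_p^m → F_p^n be a uniformly random injective affine map (affine embedding), with m ≤ n. Then E_A[‖Af − Ag‖_1] = α and E_A[‖Af − Ag‖_1^2] ≤ α^2 + p^{−m}, where Af = f∘A. Consequently Var_A(‖Af−Ag‖_1) ≤ p^{−m}, and by Chebyshev, Pr_A[‖Af−Ag‖_1 ≥ α + ε/2] ≤ 4/(p^m ε^2) for any ε > 0. -/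
open Finset

/-- An affine embedding `F_p^m → F_p^n`: an injective map of the form `x ↦ Lx + c`
with `L` linear (necessarily injective) and `c` constant. -/
def IsAffineEmbedding {p m n : ℕ} (A : (Fin m → ZMod p) → (Fin n → ZMod p)) : Prop :=
  Function.Injective A ∧
    ∃ (L : (Fin m → ZMod p) →ₗ[ZMod p] (Fin n → ZMod p)) (c : Fin n → ZMod p),
      ∀ x, A x = L x + c

noncomputable instance {p m n : ℕ} [Fact p.Prime] :
    Fintype {A : (Fin m → ZMod p) → (Fin n → ZMod p) // IsAffineEmbedding A} :=
  Fintype.ofFinite _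

/-- `L¹` average. -/
noncomputable def l1Avg {X : Type*} [Fintype X] (f : X → ℝ) : ℝ :=
  (∑ x : X, |f x|) / (Fintype.card X : ℝ)

lemma exists_linEquiv {K V : Type*} [Field K] [AddCommGroup V] [Module K V]
    {a b : V} (ha : a ≠ 0) (hb : b ≠ 0) : ∃ Φ : V ≃ₗ[K] V, Φ a = b := by
  classical
  have hib := linearIndepOn_singleton_iff (R := K) (v := id) |>.2 hb
  have hia := linearIndepOn_singleton_iff (R := K) (v := id) |>.2 ha
  set Ba := Module.Basis.extend hia
  set Bb := Module.Basis.extend hib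
  have haa : a ∈ hia.extend (Set.subset_univ _) := hia.subset_extend _ rfl
  have hbb : b ∈ hib.extend (Set.subset_univ _) := hib.subset_extend _ rfl
  set e0 := Ba.indexEquiv Bb
  set e := e0.trans (Equiv.swap (e0 ⟨a, haa⟩) ⟨b, hbb⟩)
  refine ⟨Ba.equiv Bb e, ?_⟩
  have h1 : Ba ⟨a, haa⟩ = a := Module.Basis.extend_apply_self _ _
  have h2 : Bb ⟨b, hbb⟩ = b := Module.Basis.extend_apply_self _ _
  calc (Ba.equiv Bb e) a = (Ba.equiv Bb e) (Ba ⟨a, haa⟩) := by rw [h1]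
    _ = Bb (e ⟨a, haa⟩) := Module.Basis.equiv_apply _ _ _ _
    _ = b := by simp [e, Equiv.swap_apply_left, h2]

section AEaux
variable {p m n : ℕ} [Fact p.Prime]

lemma exists_padL (hmn : m ≤ n) :
    ∃ L : (Fin m → ZMod p) →ₗ[ZMod p] (Fin n → ZMod p), Function.Injective L := by
  refine ⟨{ toFun := fun x i => if h : (i : ℕ) < m then x ⟨i, h⟩ else 0
            map_add' := by intro x y; funext i; by_cases h : (i : ℕ) < m <;> simp [h]
            map_smul' := by intro r x; funext i; by_cases h : (i : ℕ) < m <;> simp [h] }, ?_⟩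
  intro x y hxy
  funext j
  have := congrFun hxy ⟨j.1, lt_of_lt_of_le j.2 hmn⟩
  simpa using this

lemma nonempty_AE (hmn : m ≤ n) :
    Nonempty {A : (Fin m → ZMod p) → (Fin n → ZMod p) // IsAffineEmbedding A} := by
  obtain ⟨L, hL⟩ := exists_padL (p := p) hmn
  exact ⟨⟨L, hL, L, 0, fun x => (add_zero _).symm⟩⟩

/-- Post-composition with an affine automorphism of the codomain. -/
def aemap (Φ : (Fin n → ZMod p) ≃ₗ[ZMod p] (Fin n → ZMod p)) (d : Fin n → ZMod p)
    (A : {A : (Fin m → ZMod p) → (Fin n → ZMod p) // IsAffineEmbedding A}) :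
    {A : (Fin m → ZMod p) → (Fin n → ZMod p) // IsAffineEmbedding A} := by
  refine ⟨fun z => Φ (A.1 z) + d, ?_, ?_⟩
  · intro a b hab
    exact A.2.1 (Φ.injective (by simpa using hab))
  · obtain ⟨L, c, hL⟩ := A.2.2
    exact ⟨Φ.toLinearMap ∘ₗ L, Φ c + d, fun z => by simp [hL z, map_add, add_assoc]⟩

lemma aemap_apply (Φ : (Fin n → ZMod p) ≃ₗ[ZMod p] (Fin n → ZMod p)) (d : Fin n → ZMod p)
    (A : {A : (Fin m → ZMod p) → (Fin n → ZMod p) // IsAffineEmbedding A}) (z : Fin m → ZMod p) :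
    (aemap Φ d A).1 z = Φ (A.1 z) + d := rfl

lemma aemap_left_inv (Φ : (Fin n → ZMod p) ≃ₗ[ZMod p] (Fin n → ZMod p)) (d : Fin n → ZMod p)
    (A : {A : (Fin m → ZMod p) → (Fin n → ZMod p) // IsAffineEmbedding A}) :
    aemap Φ.symm (-(Φ.symm d)) (aemap Φ d A) = A := by
  apply Subtype.ext; funext z
  simp [aemap_apply, map_add]

lemma aemap_right_inv (Φ : (Fin n → ZMod p) ≃ₗ[ZMod p] (Fin n → ZMod p)) (d : Fin n → ZMod p)
    (A : {A : (Fin m → ZMod p) → (Fin n → ZMod p) // IsAffineEmbedding A}) :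
    aemap Φ d (aemap Φ.symm (-(Φ.symm d)) A) = A := by
  apply Subtype.ext; funext z
  simp [aemap_apply, map_add, map_neg]

open scoped Classical in
lemma point_fiber_card (x : Fin m → ZMod p) (v w : Fin n → ZMod p) :
    (univ.filter (fun A : {A : (Fin m → ZMod p) → (Fin n → ZMod p) // IsAffineEmbedding A} =>
        A.1 x = v)).card =
    (univ.filter (fun A : {A : (Fin m → ZMod p) → (Fin n → ZMod p) // IsAffineEmbedding A} =>
        A.1 x = w)).card := by
  refine card_nbij' (aemap (LinearEquiv.refl (ZMod p) (Fin n → ZMod p)) (w - v))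
    (aemap (LinearEquiv.refl (ZMod p) (Fin n → ZMod p)).symm
      (-((LinearEquiv.refl (ZMod p) (Fin n → ZMod p)).symm (w - v)))) ?_ ?_ ?_ ?_
  · intro A hA
    simp only [mem_coe, mem_filter, mem_univ, true_and] at hA ⊢
    simp [aemap_apply, hA]
  · intro A hA
    simp only [mem_coe, mem_filter, mem_univ, true_and] at hA ⊢
    simp [aemap_apply, hA]
  · intro A _; exact aemap_left_inv _ _ _
  · intro A _; exact aemap_right_inv _ _ _

open scoped Classical in
lemma point_count (x : Fin m → ZMod p) (u : (Fin n → ZMod p) → ℝ) :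
    (Fintype.card (Fin n → ZMod p) : ℝ) *
      ∑ A : {A : (Fin m → ZMod p) → (Fin n → ZMod p) // IsAffineEmbedding A}, u (A.1 x)
    = (Fintype.card {A : (Fin m → ZMod p) → (Fin n → ZMod p) // IsAffineEmbedding A} : ℝ) *
      ∑ v, u v := by
  set E := {A : (Fin m → ZMod p) → (Fin n → ZMod p) // IsAffineEmbedding A}
  set c : ℕ := (univ.filter (fun A : E => A.1 x = 0)).card with hc
  have hfib : ∀ v, (univ.filter (fun A : E => A.1 x = v)).card = c :=
    fun v => point_fiber_card x v 0
  have hK : Fintype.card E = Fintype.card (Fin n → ZMod p) * c := by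
    rw [← Finset.card_univ, Finset.card_eq_sum_card_fiberwise
      (f := fun A : E => A.1 x) (t := univ) (fun _ _ => mem_univ _)]
    simp [hfib, Finset.card_univ, mul_comm]
  have hsum : ∑ A : E, u (A.1 x) = (c : ℝ) * ∑ v, u v := by
    rw [← Finset.sum_fiberwise univ (fun A : E => A.1 x) (fun A => u (A.1 x)), Finset.mul_sum]
    refine Finset.sum_congr rfl fun v _ => ?_
    have : ∀ A ∈ univ.filter (fun A : E => A.1 x = v), u (A.1 x) = u v := by
      intro A hA; rw [(mem_filter.1 hA).2]
    rw [Finset.sum_congr rfl this, Finset.sum_const, hfib v, nsmul_eq_mul]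
  rw [hsum, hK]
  push_cast
  ring

open scoped Classical in
lemma pair_fiber_card (x y : Fin m → ZMod p) (v v' w w' : Fin n → ZMod p)
    (hv : v ≠ v') (hw : w ≠ w') :
    (univ.filter (fun A : {A : (Fin m → ZMod p) → (Fin n → ZMod p) // IsAffineEmbedding A} =>
        (A.1 x, A.1 y) = (v, v'))).card =
    (univ.filter (fun A : {A : (Fin m → ZMod p) → (Fin n → ZMod p) // IsAffineEmbedding A} =>
        (A.1 x, A.1 y) = (w, w'))).card := by
  obtain ⟨Φ, hΦ⟩ := exists_linEquiv (K := ZMod p) (sub_ne_zero.2 (Ne.symm hv))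
    (sub_ne_zero.2 (Ne.symm hw))
  set d : Fin n → ZMod p := w - Φ v with hd
  refine card_nbij' (aemap Φ d) (aemap Φ.symm (-(Φ.symm d))) ?_ ?_ ?_ ?_
  · intro A hA
    simp only [mem_coe, mem_filter, mem_univ, true_and, Prod.mk.injEq] at hA ⊢
    obtain ⟨h1, h2⟩ := hA
    constructor
    · rw [aemap_apply, h1, hd]; abel
    · rw [aemap_apply, h2, hd]
      have : Φ v' + (w - Φ v) = Φ (v' - v) + w := by rw [map_sub]; abel
      rw [this, hΦ]; abel
  · intro A hA
    simp only [mem_coe, mem_filter, mem_univ, true_and, Prod.mk.injEq] at hA ⊢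
    obtain ⟨h1, h2⟩ := hA
    have hsymd : Φ.symm d = Φ.symm w - v := by rw [hd, map_sub, Φ.symm_apply_apply]
    constructor
    · rw [aemap_apply, h1, hsymd]; abel
    · rw [aemap_apply, h2, hsymd]
      have heq : Φ.symm w' - Φ.symm w = v' - v := by
        rw [← map_sub, ← hΦ, Φ.symm_apply_apply]
      have h3 : Φ.symm w' + -(Φ.symm w - v) = (Φ.symm w' - Φ.symm w) + v := by abel
      rw [h3, heq]; abel
  · intro A _; exact aemap_left_inv _ _ _
  · intro A _; exact aemap_right_inv _ _ _

open scoped Classical in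
lemma pair_count (hmn : m ≤ n) (x y : Fin m → ZMod p) (hxy : x ≠ y)
    (u : (Fin n → ZMod p) → (Fin n → ZMod p) → ℝ) :
    ((univ.filter (fun pr : (Fin n → ZMod p) × (Fin n → ZMod p) => pr.1 ≠ pr.2)).card : ℝ) *
      ∑ A : {A : (Fin m → ZMod p) → (Fin n → ZMod p) // IsAffineEmbedding A}, u (A.1 x) (A.1 y)
    = (Fintype.card {A : (Fin m → ZMod p) → (Fin n → ZMod p) // IsAffineEmbedding A} : ℝ) *
      ∑ pr ∈ univ.filter (fun pr : (Fin n → ZMod p) × (Fin n → ZMod p) => pr.1 ≠ pr.2),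
        u pr.1 pr.2 := by
  haveI : Fact (1 < p) := ⟨(Fact.out : p.Prime).one_lt⟩
  set E := {A : (Fin m → ZMod p) → (Fin n → ZMod p) // IsAffineEmbedding A}
  set S := univ.filter (fun pr : (Fin n → ZMod p) × (Fin n → ZMod p) => pr.1 ≠ pr.2) with hS
  have hm : m ≠ 0 := by
    rintro rfl
    exact hxy (funext fun i => i.elim0)
  have hn : n ≠ 0 := fun h => hm (Nat.le_zero.1 (h ▸ hmn))
  set c : ℕ := (univ.filter (fun A : E =>
      (A.1 x, A.1 y) = ((0 : Fin n → ZMod p), (fun _ => 1 : Fin n → ZMod p)))).card with hc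
  have hfib : ∀ pr ∈ S, (univ.filter (fun A : E => (A.1 x, A.1 y) = pr)).card = c := by
    rintro ⟨v, v'⟩ hpr
    simp only [hS, mem_filter, mem_univ, true_and] at hpr
    exact pair_fiber_card x y v v' _ _ hpr (fun h => zero_ne_one
      (congrFun h ⟨0, Nat.pos_of_ne_zero hn⟩))
  have hdiag : ∀ pr : (Fin n → ZMod p) × (Fin n → ZMod p), pr.1 = pr.2 →
      (univ.filter (fun A : E => (A.1 x, A.1 y) = pr)).card = 0 := by
    rintro ⟨v, v'⟩ h
    simp only at h
    subst h
    rw [Finset.card_eq_zero, Finset.filter_eq_empty_iff]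
    rintro A - hAe
    simp only [Prod.mk.injEq] at hAe
    exact hxy (A.2.1 (hAe.1.trans hAe.2.symm))
  have hK : Fintype.card E = S.card * c := by
    rw [← Finset.card_univ, Finset.card_eq_sum_card_fiberwise
      (f := fun A : E => (A.1 x, A.1 y)) (t := univ) (fun _ _ => mem_univ _)]
    rw [← Finset.sum_filter_add_sum_filter_not univ
      (fun pr : (Fin n → ZMod p) × (Fin n → ZMod p) => pr.1 ≠ pr.2)]
    have h2 : ∑ pr ∈ univ.filter
        (fun pr : (Fin n → ZMod p) × (Fin n → ZMod p) => ¬ pr.1 ≠ pr.2),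
        (univ.filter (fun A : E => (A.1 x, A.1 y) = pr)).card = 0 := by
      refine Finset.sum_eq_zero fun pr hpr => ?_
      simp only [mem_filter, not_not] at hpr
      exact hdiag pr hpr.2
    rw [Finset.sum_congr rfl (fun pr hpr => hfib pr hpr), h2, Finset.sum_const,
      smul_eq_mul, add_zero]
  have hsum : ∑ A : E, u (A.1 x) (A.1 y)
      = (c : ℝ) * ∑ pr ∈ S, u pr.1 pr.2 := by
    rw [← Finset.sum_fiberwise univ (fun A : E => (A.1 x, A.1 y))
      (fun A => u (A.1 x) (A.1 y))]
    rw [← Finset.sum_filter_add_sum_filter_not univ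
      (fun pr : (Fin n → ZMod p) × (Fin n → ZMod p) => pr.1 ≠ pr.2)]
    have h2 : ∑ pr ∈ univ.filter
        (fun pr : (Fin n → ZMod p) × (Fin n → ZMod p) => ¬ pr.1 ≠ pr.2),
        (∑ A ∈ univ.filter (fun A : E => (A.1 x, A.1 y) = pr), u (A.1 x) (A.1 y)) = 0 := by
      refine Finset.sum_eq_zero fun pr hpr => ?_
      simp only [mem_filter, not_not] at hpr
      have := hdiag pr hpr.2
      rw [Finset.card_eq_zero] at this
      rw [this, Finset.sum_empty]
    have h1 : ∀ pr ∈ S, (∑ A ∈ univ.filter (fun A : E => (A.1 x, A.1 y) = pr),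
        u (A.1 x) (A.1 y)) = (c : ℝ) * u pr.1 pr.2 := by
      intro pr hpr
      have : ∀ A ∈ univ.filter (fun A : E => (A.1 x, A.1 y) = pr),
          u (A.1 x) (A.1 y) = u pr.1 pr.2 := by
        intro A hA
        have := (mem_filter.1 hA).2
        rw [← this]
      rw [Finset.sum_congr rfl this, Finset.sum_const, hfib pr hpr, nsmul_eq_mul]
    rw [Finset.sum_congr rfl h1, h2, add_zero, ← Finset.mul_sum]
  rw [hsum, hK]
  push_cast
  ring

end AEaux

set_option maxHeartbeats 1600000 in
open scoped Classical in
/-- Let `f, g : F_p^n → {0,1}` with `‖f−g‖₁ = α`, and let `A` be a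
uniformly random affine embedding `F_p^m → F_p^n`, `m ≤ n`. Then
`E_A ‖Af−Ag‖₁ = α`, `E_A ‖Af−Ag‖₁² ≤ α² + p^{−m}`, so `Var_A ‖Af−Ag‖₁ ≤ p^{−m}`, and
`Pr_A[‖Af−Ag‖₁ ≥ α + ε/2] ≤ 4/(p^m ε²)`. -/
theorem random_restriction_distance {p m n : ℕ} [Fact p.Prime] (hmn : m ≤ n)
    (f g : (Fin n → ZMod p) → ℝ)
    (hf : ∀ x, f x ∈ ({0, 1} : Set ℝ)) (hg : ∀ x, g x ∈ ({0, 1} : Set ℝ))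
    (α : ℝ) (hα : l1Avg (fun x => f x - g x) = α) (ε : ℝ) (hε : 0 < ε) :
    (∑ A : {A : (Fin m → ZMod p) → (Fin n → ZMod p) // IsAffineEmbedding A},
          l1Avg (fun x => f (A.1 x) - g (A.1 x))) /
        (Fintype.card {A : (Fin m → ZMod p) → (Fin n → ZMod p) // IsAffineEmbedding A} : ℝ)
      = α ∧
    (∑ A : {A : (Fin m → ZMod p) → (Fin n → ZMod p) // IsAffineEmbedding A},
          (l1Avg (fun x => f (A.1 x) - g (A.1 x))) ^ 2) /
        (Fintype.card {A : (Fin m → ZMod p) → (Fin n → ZMod p) // IsAffineEmbedding A} : ℝ)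
      ≤ α ^ 2 + ((p : ℝ) ^ m)⁻¹ ∧
    (∑ A : {A : (Fin m → ZMod p) → (Fin n → ZMod p) // IsAffineEmbedding A},
          (l1Avg (fun x => f (A.1 x) - g (A.1 x)) - α) ^ 2) /
        (Fintype.card {A : (Fin m → ZMod p) → (Fin n → ZMod p) // IsAffineEmbedding A} : ℝ)
      ≤ ((p : ℝ) ^ m)⁻¹ ∧
    ((Finset.univ.filter
          (fun A : {A : (Fin m → ZMod p) → (Fin n → ZMod p) // IsAffineEmbedding A} =>
            α + ε / 2 ≤ l1Avg (fun x => f (A.1 x) - g (A.1 x)))).card : ℝ) /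
        (Fintype.card {A : (Fin m → ZMod p) → (Fin n → ZMod p) // IsAffineEmbedding A} : ℝ)
      ≤ 4 / ((p : ℝ) ^ m * ε ^ 2) := by
  haveI hne := nonempty_AE (p := p) hmn
  set E := {A : (Fin m → ZMod p) → (Fin n → ZMod p) // IsAffineEmbedding A}
  set h : (Fin n → ZMod p) → ℝ := fun v => |f v - g v| with hh
  set M : ℝ := (p : ℝ) ^ m with hM
  set N : ℝ := (p : ℝ) ^ n with hN
  have ppos : (0:ℝ) < (p:ℝ) := by exact_mod_cast (Fact.out : p.Prime).pos
  have Mpos : 0 < M := by positivity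
  have Npos : 0 < N := by positivity
  have cardD : (Fintype.card (Fin m → ZMod p) : ℝ) = M := by
    rw [hM]; simp [ZMod.card]
  have cardC : (Fintype.card (Fin n → ZMod p) : ℝ) = N := by
    rw [hN]; simp [ZMod.card]
  set K : ℝ := (Fintype.card E : ℝ) with hK
  have Kpos : 0 < K := by
    rw [hK]
    exact_mod_cast Fintype.card_pos_iff.2 hne
  have h01 : ∀ v, h v = 0 ∨ h v = 1 := by
    intro v
    have h1 := hf v
    have h2 := hg v
    simp only [Set.mem_insert_iff, Set.mem_singleton_iff] at h1 h2
    rcases h1 with h1 | h1 <;> rcases h2 with h2 | h2 <;> simp [hh, h1, h2]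
  have hnn : ∀ v, 0 ≤ h v := fun v => abs_nonneg _
  have hle1 : ∀ v, h v ≤ 1 := by
    intro v; rcases h01 v with h' | h' <;> rw [h'] <;> norm_num
  have hsq : ∀ v, h v * h v = h v := by
    intro v; rcases h01 v with h' | h' <;> rw [h'] <;> ring
  have hαsum : ∑ v, h v = N * α := by
    have hα' : (∑ v, h v) / (Fintype.card (Fin n → ZMod p) : ℝ) = α := hα
    rw [cardC] at hα'
    field_simp at hα'
    linarith [hα']
  have hα0 : 0 ≤ α := by
    have : 0 ≤ ∑ v, h v := Finset.sum_nonneg fun v _ => hnn v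
    nlinarith
  have hα1 : α ≤ 1 := by
    have : ∑ v, h v ≤ ∑ _v : (Fin n → ZMod p), (1:ℝ) :=
      Finset.sum_le_sum fun v _ => hle1 v
    rw [Finset.sum_const, Finset.card_univ, nsmul_eq_mul, mul_one, cardC] at this
    nlinarith
  have hX : ∀ A : E, l1Avg (fun x => f (A.1 x) - g (A.1 x)) = (∑ x, h (A.1 x)) / M := by
    intro A
    rw [l1Avg, cardD]
  have SA1 : ∀ x : Fin m → ZMod p, ∑ A : E, h (A.1 x) = K * α := by
    intro x
    have hpt := point_count (p := p) x h
    rw [cardC, hαsum, ← hK] at hpt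
    have hNe : N ≠ 0 := ne_of_gt Npos
    have : N * (∑ A : E, h (A.1 x)) = N * (K * α) := by rw [hpt]; ring
    exact mul_left_cancel₀ hNe this
  have SA2 : ∀ x y : Fin m → ZMod p, x ≠ y →
      ∑ A : E, h (A.1 x) * h (A.1 y) ≤ K * α ^ 2 := by
    intro x y hxy
    have hpc := pair_count (p := p) hmn x y hxy (fun a b => h a * h b)
    rw [← hK] at hpc
    set S := univ.filter
      (fun pr : (Fin n → ZMod p) × (Fin n → ZMod p) => pr.1 ≠ pr.2) with hS
    have hdiagcard : (univ.filter
        (fun pr : (Fin n → ZMod p) × (Fin n → ZMod p) => ¬ pr.1 ≠ pr.2)).card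
        = Fintype.card (Fin n → ZMod p) := by
      rw [← Finset.card_univ]
      refine card_nbij' (fun pr => pr.1) (fun v => (v, v)) (fun _ _ => mem_univ _) ?_ ?_ ?_
      · intro v _
        simp
      · intro pr hpr
        simp only [mem_coe, mem_filter, mem_univ, true_and, not_not] at hpr
        exact Prod.ext rfl hpr
      · intro v _; rfl
    have hScard : (S.card : ℝ) = N ^ 2 - N := by
      have hsplit := Finset.card_filter_add_card_filter_not (s := univ)
        (p := fun pr : (Fin n → ZMod p) × (Fin n → ZMod p) => pr.1 ≠ pr.2)
      rw [hdiagcard, Finset.card_univ] at hsplit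
      have hcard2 : (Fintype.card ((Fin n → ZMod p) × (Fin n → ZMod p)) : ℝ) = N ^ 2 := by
        rw [Fintype.card_prod, Nat.cast_mul, cardC]; ring
      have : (S.card : ℝ) + N = N ^ 2 := by
        rw [← hcard2, ← cardC]
        exact_mod_cast congrArg (Nat.cast (R := ℝ)) hsplit
      linarith
    have hSsum : ∑ pr ∈ S, h pr.1 * h pr.2 = (N * α) ^ 2 - N * α := by
      have htot : ∑ pr : (Fin n → ZMod p) × (Fin n → ZMod p), h pr.1 * h pr.2
          = (N * α) ^ 2 := by
        rw [Fintype.sum_prod_type]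
        have hrow : ∀ v : Fin n → ZMod p, ∑ w, h v * h w = h v * (N * α) := by
          intro v; rw [← Finset.mul_sum, hαsum]
        rw [Finset.sum_congr rfl fun v _ => hrow v, ← Finset.sum_mul, hαsum]
        ring
      have hdiagsum : ∑ pr ∈ univ.filter
          (fun pr : (Fin n → ZMod p) × (Fin n → ZMod p) => ¬ pr.1 ≠ pr.2),
          h pr.1 * h pr.2 = N * α := by
        rw [← hαsum]
        refine Finset.sum_nbij' (fun pr => pr.1) (fun v => (v, v)) ?_ ?_ ?_ ?_ ?_
        · intro pr _; exact mem_univ _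
        · intro v _; simp
        · intro pr hpr
          simp only [mem_filter, mem_univ, true_and, not_not] at hpr
          exact Prod.ext rfl hpr
        · intro v _; rfl
        · intro pr hpr
          simp only [mem_filter, mem_univ, true_and, not_not] at hpr
          show h pr.1 * h pr.2 = h pr.1
          rw [← hpr, hsq]
      have hsplit2 := Finset.sum_filter_add_sum_filter_not univ
        (fun pr : (Fin n → ZMod p) × (Fin n → ZMod p) => pr.1 ≠ pr.2)
        (fun pr => h pr.1 * h pr.2)
      rw [hdiagsum, htot] at hsplit2
      linarith
    rw [hScard, hSsum] at hpc
    have hN2 : 2 ≤ N := by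
      have hm0 : m ≠ 0 := by
        rintro rfl
        exact hxy (funext fun i => i.elim0)
      have hn0 : n ≠ 0 := fun h' => hm0 (Nat.le_zero.1 (h' ▸ hmn))
      have hp2 : (2:ℝ) ≤ (p:ℝ) := by exact_mod_cast (Fact.out : p.Prime).two_le
      calc (2:ℝ) ≤ (p:ℝ) := hp2
        _ = (p:ℝ) ^ 1 := (pow_one _).symm
        _ ≤ (p:ℝ) ^ n := by
            exact pow_le_pow_right₀ (by linarith) (Nat.one_le_iff_ne_zero.2 hn0)
    have hfac : 0 < N ^ 2 - N := by nlinarith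
    have key : K * ((N * α) ^ 2 - N * α) ≤ (N ^ 2 - N) * (K * α ^ 2) := by
      have hdiff : (N ^ 2 - N) * (K * α ^ 2) - K * ((N * α) ^ 2 - N * α)
          = K * N * (α - α ^ 2) := by ring
      have hnn2 : 0 ≤ K * N * (α - α ^ 2) := by
        apply mul_nonneg (mul_nonneg Kpos.le Npos.le)
        nlinarith [hα0, hα1]
      linarith
    have hfin : (N ^ 2 - N) * (∑ A : E, h (A.1 x) * h (A.1 y))
        ≤ (N ^ 2 - N) * (K * α ^ 2) := by
      rw [hpc]; exact key
    exact le_of_mul_le_mul_left hfin hfac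
  have hT1 : ∑ A : E, l1Avg (fun x => f (A.1 x) - g (A.1 x)) = K * α := by
    rw [Finset.sum_congr rfl fun A _ => hX A, ← Finset.sum_div, Finset.sum_comm]
    rw [Finset.sum_congr rfl fun x (_ : x ∈ univ) => SA1 x, Finset.sum_const,
      Finset.card_univ, nsmul_eq_mul, cardD]
    field_simp
  have hT2 : ∑ A : E, (l1Avg (fun x => f (A.1 x) - g (A.1 x))) ^ 2 ≤ K * α ^ 2 + K / M := by
    have hXsq : ∀ A : E, (l1Avg (fun x => f (A.1 x) - g (A.1 x))) ^ 2
        = (∑ x, ∑ y, h (A.1 x) * h (A.1 y)) / M ^ 2 := by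
      intro A
      rw [hX A, div_pow, sq (∑ x, h (A.1 x)), Finset.sum_mul_sum]
    rw [Finset.sum_congr rfl fun A _ => hXsq A, ← Finset.sum_div]
    have hswap : ∑ A : E, ∑ x, ∑ y, h (A.1 x) * h (A.1 y)
        = ∑ x, ∑ y, ∑ A : E, h (A.1 x) * h (A.1 y) := by
      rw [Finset.sum_comm]
      exact Finset.sum_congr rfl fun x _ => Finset.sum_comm
    rw [hswap]
    have hbound : ∑ x, ∑ y, ∑ A : E, h (A.1 x) * h (A.1 y)
        ≤ M ^ 2 * (K * α ^ 2) + M * (K * α) := by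
      have hinner : ∀ x y : Fin m → ZMod p, ∑ A : E, h (A.1 x) * h (A.1 y)
          ≤ K * α ^ 2 + (if x = y then K * α else 0) := by
        intro x y
        by_cases hxy : x = y
        · subst hxy
          rw [if_pos rfl]
          have hdd : ∑ A : E, h (A.1 x) * h (A.1 x) = K * α := by
            rw [Finset.sum_congr rfl fun A _ => hsq (A.1 x)]
            exact SA1 x
          rw [hdd]
          have : 0 ≤ K * α ^ 2 := mul_nonneg Kpos.le (sq_nonneg α)
          linarith
        · simp only [if_neg hxy, add_zero]
          exact SA2 x y hxy
      calc ∑ x, ∑ y, ∑ A : E, h (A.1 x) * h (A.1 y)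
          ≤ ∑ x : Fin m → ZMod p, ∑ y : Fin m → ZMod p,
              (K * α ^ 2 + (if x = y then K * α else 0)) :=
            Finset.sum_le_sum fun x _ => Finset.sum_le_sum fun y _ => hinner x y
        _ = M ^ 2 * (K * α ^ 2) + M * (K * α) := by
            have hin : ∀ x : Fin m → ZMod p, ∑ y : Fin m → ZMod p,
                (K * α ^ 2 + (if x = y then K * α else 0))
                = M * (K * α ^ 2) + K * α := by
              intro x
              rw [Finset.sum_add_distrib, Finset.sum_const, Finset.card_univ,
                nsmul_eq_mul, cardD, Finset.sum_ite_eq univ x (fun _ => K * α),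
                if_pos (mem_univ x)]
            rw [Finset.sum_congr rfl fun x _ => hin x, Finset.sum_const,
              Finset.card_univ, nsmul_eq_mul, cardD]
            ring
    calc (∑ x, ∑ y, ∑ A : E, h (A.1 x) * h (A.1 y)) / M ^ 2
        ≤ (M ^ 2 * (K * α ^ 2) + M * (K * α)) / M ^ 2 := by
          have hM2 : (0:ℝ) < M ^ 2 := by positivity
          exact (div_le_div_iff_of_pos_right hM2).2 hbound
      _ = K * α ^ 2 + K * α / M := by
          have hM0 : M ≠ 0 := ne_of_gt Mpos
          rw [add_div, mul_div_cancel_left₀ _ (pow_ne_zero 2 hM0), pow_two M,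
            mul_div_mul_left _ _ hM0]
      _ ≤ K * α ^ 2 + K / M := by
          have hKα : K * α ≤ K := by nlinarith [Kpos.le]
          have := div_le_div_of_nonneg_right hKα Mpos.le
          linarith [this]
  have hT3 : ∑ A : E, (l1Avg (fun x => f (A.1 x) - g (A.1 x)) - α) ^ 2 ≤ K / M := by
    have hexp : ∑ A : E, (l1Avg (fun x => f (A.1 x) - g (A.1 x)) - α) ^ 2
        = (∑ A : E, (l1Avg (fun x => f (A.1 x) - g (A.1 x))) ^ 2)
          - 2 * α * (∑ A : E, l1Avg (fun x => f (A.1 x) - g (A.1 x))) + K * α ^ 2 := by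
      have hterm : ∀ A : E, (l1Avg (fun x => f (A.1 x) - g (A.1 x)) - α) ^ 2
          = (l1Avg (fun x => f (A.1 x) - g (A.1 x))) ^ 2
            - 2 * α * l1Avg (fun x => f (A.1 x) - g (A.1 x)) + α ^ 2 := by
        intro A; ring
      rw [Finset.sum_congr rfl fun A _ => hterm A, Finset.sum_add_distrib,
        Finset.sum_sub_distrib, ← Finset.mul_sum, Finset.sum_const, Finset.card_univ,
        nsmul_eq_mul, ← hK]
    rw [hexp, hT1]
    nlinarith [hT2]
  refine ⟨?_, ?_, ?_, ?_⟩
  · rw [hT1, mul_comm, mul_div_assoc, div_self (ne_of_gt Kpos), mul_one]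
  · calc (∑ A : E, (l1Avg (fun x => f (A.1 x) - g (A.1 x))) ^ 2) / K
        ≤ (K * α ^ 2 + K / M) / K := div_le_div_of_nonneg_right hT2 Kpos.le
      _ = α ^ 2 + M⁻¹ := by
          rw [add_div, mul_div_cancel_left₀ _ (ne_of_gt Kpos), div_right_comm,
            div_self (ne_of_gt Kpos), one_div]
  · calc (∑ A : E, (l1Avg (fun x => f (A.1 x) - g (A.1 x)) - α) ^ 2) / K
        ≤ (K / M) / K := div_le_div_of_nonneg_right hT3 Kpos.le
      _ = M⁻¹ := by
          rw [div_right_comm, div_self (ne_of_gt Kpos), one_div]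
  · set Sf := univ.filter (fun A : E =>
      α + ε / 2 ≤ l1Avg (fun x => f (A.1 x) - g (A.1 x))) with hSf
    have hcheb : (Sf.card : ℝ) * (ε / 2) ^ 2 ≤ K / M := by
      have h1 : (Sf.card : ℝ) * (ε / 2) ^ 2
          = ∑ _A ∈ Sf, (ε / 2) ^ 2 := by
        rw [Finset.sum_const, nsmul_eq_mul]
      have h2 : ∑ A ∈ Sf, (ε / 2) ^ 2
          ≤ ∑ A ∈ Sf, (l1Avg (fun x => f (A.1 x) - g (A.1 x)) - α) ^ 2 := by
        refine Finset.sum_le_sum fun A hA => ?_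
        have hA' := (mem_filter.1 hA).2
        have hge : ε / 2 ≤ l1Avg (fun x => f (A.1 x) - g (A.1 x)) - α := by linarith
        exact pow_le_pow_left₀ (by positivity) hge 2
      have h3 : ∑ A ∈ Sf, (l1Avg (fun x => f (A.1 x) - g (A.1 x)) - α) ^ 2
          ≤ ∑ A : E, (l1Avg (fun x => f (A.1 x) - g (A.1 x)) - α) ^ 2 :=
        Finset.sum_le_sum_of_subset_of_nonneg (Finset.subset_univ _)
          (fun A _ _ => sq_nonneg _)
      linarith [hT3]
    rw [div_le_div_iff₀ Kpos (by positivity : (0:ℝ) < M * ε ^ 2)]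
    have hKM : M * (K / M) = K := by field_simp
    nlinarith [mul_le_mul_of_nonneg_left hcheb Mpos.le, hε.le, Kpos.le,
      (Nat.cast_nonneg Sf.card : (0:ℝ) ≤ (Sf.card : ℝ))]
end
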